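/- Let G be a finite 3-regular bipartite graph whose vertex set is partitioned into two independent sets A and B. Let L be a list assignment that assigns a list of size 3 to each vertex in A and a list of size 2 to each vertex in B. Then G is L-choosable. -/

import Mathlib

open Finset

section Aux

variable {V : Type*} [Fintype V] [DecidableEq V]

/-- In a 3-regular graph there is an injective choice of a neighbour for every vertex
(a "matching" in the sense we need), by Hall's theorem. -/
lemma exists_injective_neighbor (G : SimpleGraph V) [DecidableRel G.Adj]
    (hreg : ∀ v, (G.neighborFinset v).card = 3) :
    ∃ f : V → V, Function.Injective f ∧ ∀ v, f v ∈ G.neighborFinset v := by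
  have hall := Finset.all_card_le_biUnion_card_iff_exists_injective
    (ι := V) (α := V) (fun v => G.neighborFinset v)
  refine hall.1 ?_
  intro s
  set T := s.biUnion (fun v => G.neighborFinset v) with hT
  have h1 : ∀ v ∈ s, G.neighborFinset v = T.filter (fun w => G.Adj v w) := by
    intro v hv
    ext w
    simp only [Finset.mem_filter, SimpleGraph.mem_neighborFinset]
    constructor
    · intro h
      exact ⟨Finset.mem_biUnion.2 ⟨v, hv, by simpa using h⟩, h⟩
    · exact And.right
  have h2 : 3 * s.card = ∑ v ∈ s, (G.neighborFinset v).card := by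
    rw [Finset.sum_congr rfl (fun v _ => hreg v)]
    simp [mul_comm]
  have h3 : ∑ v ∈ s, (G.neighborFinset v).card
      = ∑ w ∈ T, (s.filter (fun v => G.Adj v w)).card := by
    calc ∑ v ∈ s, (G.neighborFinset v).card
        = ∑ v ∈ s, ∑ w ∈ T, (if G.Adj v w then 1 else 0) := by
          refine Finset.sum_congr rfl fun v hv => ?_
          rw [h1 v hv, Finset.card_filter]
      _ = ∑ w ∈ T, ∑ v ∈ s, (if G.Adj v w then 1 else 0) := Finset.sum_comm
      _ = _ := by
          refine Finset.sum_congr rfl fun w _ => ?_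
          rw [Finset.card_filter]
  have h4 : ∀ w, (s.filter (fun v => G.Adj v w)).card ≤ 3 := by
    intro w
    rw [← hreg w]
    apply Finset.card_le_card
    intro v hv
    simp only [Finset.mem_filter] at hv
    simpa using hv.2.symm
  have h5 : 3 * s.card ≤ 3 * T.card := by
    rw [h2, h3]
    calc ∑ w ∈ T, (s.filter (fun v => G.Adj v w)).card
        ≤ ∑ _w ∈ T, 3 := Finset.sum_le_sum fun w _ => h4 w
      _ = 3 * T.card := by simp [mul_comm]
  omega

/-- The orientation: a vertex of `A` points along all its non-matching edges,
a vertex outside `A` points along its matching edge (if any). -/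
def orient (G : SimpleGraph V) (A : Set V) (f : V → V) (u v : V) : Prop :=
  G.Adj u v ∧ ((u ∈ A ∧ f u ≠ v) ∨ (u ∉ A ∧ v ∈ A ∧ f v = u))

/-- Every induced subdigraph of our orientation has a kernel. -/
lemma kernel_exists (G : SimpleGraph V) (A B : Set V) (f : V → V)
    (hunion : A ∪ B = Set.univ) (hdisj : A ∩ B = ∅)
    (hAind : ∀ u ∈ A, ∀ v ∈ A, ¬ G.Adj u v)
    (hBind : ∀ u ∈ B, ∀ v ∈ B, ¬ G.Adj u v)
    (hfadj : ∀ v, G.Adj v (f v)) (U : Finset V) :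
    ∃ K : Finset V, K ⊆ U ∧ (∀ u ∈ K, ∀ v ∈ K, ¬ G.Adj u v) ∧
      ∀ v ∈ U, v ∉ K → ∃ w ∈ K, orient G A f v w := by
  classical
  have hnotAB : ∀ v, v ∈ A → v ∈ B → False := by
    intro v h1 h2
    have : v ∈ A ∩ B := ⟨h1, h2⟩
    rw [hdisj] at this
    exact this
  -- least fixed point construction for the B-part of the kernel
  set Φ : Set V →o Set V :=
    ⟨fun T => {b | b ∈ B ∧ b ∈ U ∧ ∀ a, a ∈ A → a ∈ U → f a = b →
        ∃ b' ∈ T, G.Adj a b' ∧ b' ≠ b},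
     by
       intro T T' hTT' b hb
       refine ⟨hb.1, hb.2.1, fun a h1 h2 h3 => ?_⟩
       obtain ⟨b', hb', h⟩ := hb.2.2 a h1 h2 h3
       exact ⟨b', hTT' hb', h⟩⟩ with hΦ
  set T : Set V := Φ.lfp with hTdef
  have hfix : Φ T = T := OrderHom.map_lfp Φ
  have hTmem : ∀ b ∈ T, b ∈ B ∧ b ∈ U ∧ ∀ a, a ∈ A → a ∈ U → f a = b →
      ∃ b' ∈ T, G.Adj a b' ∧ b' ≠ b := by
    intro b hb
    rw [← hfix] at hb
    exact hb
  refine ⟨U.filter (fun v => v ∈ T ∨ (v ∈ A ∧ ∀ b ∈ T, ¬ G.Adj v b)),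
    Finset.filter_subset _ _, ?_, ?_⟩
  · -- independence
    intro u hu v hv
    rw [Finset.mem_filter] at hu hv
    rcases hu.2 with huT | ⟨huA, hu2⟩ <;> rcases hv.2 with hvT | ⟨hvA, hv2⟩
    · exact hBind u (hTmem u huT).1 v (hTmem v hvT).1
    · intro h
      exact hv2 u huT h.symm
    · exact hu2 v hvT
    · exact hAind u huA v hvA
  · -- coverage
    intro v hvU hvK
    rw [Finset.mem_filter, not_and_or] at hvK
    have hvK' : ¬ (v ∈ T ∨ (v ∈ A ∧ ∀ b ∈ T, ¬ G.Adj v b)) := by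
      rcases hvK with h | h
      · exact absurd hvU h
      · exact h
    push_neg at hvK'
    obtain ⟨hvT, hvK2⟩ := hvK'
    have hvAB : v ∈ A ∪ B := by rw [hunion]; trivial
    rcases hvAB with hvA | hvB
    · -- v ∈ A : it has a neighbour in T, and one which is not f v
      obtain ⟨b, hbT, hadj⟩ := hvK2 hvA
      have hbK : ∀ b' ∈ T, b' ∈ U.filter (fun x => x ∈ T ∨ (x ∈ A ∧ ∀ b ∈ T, ¬ G.Adj x b)) :=
        fun b' hb' => Finset.mem_filter.2 ⟨(hTmem b' hb').2.1, Or.inl hb'⟩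
      by_cases hfb : f v = b
      · -- use the fixed point property at b
        obtain ⟨b', hb'T, hb'adj, hb'ne⟩ := (hTmem b hbT).2.2 v hvA hvU hfb
        refine ⟨b', hbK b' hb'T, hb'adj, Or.inl ⟨hvA, ?_⟩⟩
        rw [hfb]
        exact fun h => hb'ne h.symm
      · exact ⟨b, hbK b hbT, hadj, Or.inl ⟨hvA, hfb⟩⟩
    · -- v ∈ B : it is not in T, so it has a "partner" in U with no T-neighbours
      have hvA : v ∉ A := fun h => hnotAB v h hvB
      have hvΦ : v ∉ Φ T := by rw [hfix]; exact hvT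
      change ¬ (v ∈ B ∧ v ∈ U ∧ ∀ a, a ∈ A → a ∈ U → f a = v →
          ∃ b' ∈ T, G.Adj a b' ∧ b' ≠ v) at hvΦ
      simp only [hΦ, OrderHom.coe_mk, Set.mem_setOf_eq, not_and, not_forall] at hvΦ
      obtain ⟨a, haA, haU, hfa, hno⟩ := hvΦ hvB hvU
      push_neg at hno
      have haK : a ∈ U.filter (fun x => x ∈ T ∨ (x ∈ A ∧ ∀ b ∈ T, ¬ G.Adj x b)) := by
        refine Finset.mem_filter.2 ⟨haU, Or.inr ⟨haA, fun b hb hadj => ?_⟩⟩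
        have := hno b hb hadj
        rw [this] at hb
        exact hvT hb
      refine ⟨a, haK, ?_, Or.inr ⟨hvA, haA, hfa⟩⟩
      have := hfadj a
      rw [hfa] at this
      exact this.symm

/-- The kernel method: if every induced subdigraph of the orientation `r` has a kernel
and each list is larger than the out-degree, then we can properly colour from the lists. -/
lemma kernel_coloring (G : SimpleGraph V) (r : V → V → Prop) [DecidableRel r]
    (hr : ∀ u v, r u v → G.Adj u v)
    (hker : ∀ U : Finset V, ∃ K : Finset V, K ⊆ U ∧ (∀ u ∈ K, ∀ v ∈ K, ¬ G.Adj u v) ∧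
      ∀ v ∈ U, v ∉ K → ∃ w ∈ K, r v w) :
    ∀ (n : ℕ) (U : Finset V) (L : V → Finset ℕ),
      (∑ v ∈ U, (L v).card) ≤ n →
      (∀ v ∈ U, (U.filter (fun w => r v w)).card < (L v).card) →
      ∃ c : V → ℕ, (∀ v ∈ U, c v ∈ L v) ∧
        ∀ u ∈ U, ∀ v ∈ U, G.Adj u v → c u ≠ c v := by
  classical
  intro n
  induction n with
  | zero =>
    intro U L hsum hdeg
    have hU : U = ∅ := by
      by_contra h
      obtain ⟨v, hv⟩ := Finset.nonempty_iff_ne_empty.2 h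
      have h1 := hdeg v hv
      have h2 : (L v).card ≤ ∑ v ∈ U, (L v).card :=
        Finset.single_le_sum (f := fun v => (L v).card) (fun _ _ => Nat.zero_le _) hv
      omega
    subst hU
    exact ⟨fun _ => 0, by simp, by simp⟩
  | succ n ih =>
    intro U L hsum hdeg
    rcases Finset.eq_empty_or_nonempty U with hU | ⟨v₀, hv₀⟩
    · subst hU
      exact ⟨fun _ => 0, by simp, by simp⟩
    · have hL0 : (L v₀).Nonempty := Finset.card_pos.1 (by have := hdeg v₀ hv₀; omega)
      obtain ⟨α, hα⟩ := hL0
      set Uα := U.filter (fun v => α ∈ L v) with hUα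
      obtain ⟨K, hKsub, hKind, hKcov⟩ := hker Uα
      have hKU : K ⊆ U := hKsub.trans (Finset.filter_subset _ _)
      have hKα : ∀ k ∈ K, α ∈ L k := fun k hk => (Finset.mem_filter.1 (hKsub hk)).2
      have hKne : K.Nonempty := by
        have hv0' : v₀ ∈ Uα := Finset.mem_filter.2 ⟨hv₀, hα⟩
        by_cases h : v₀ ∈ K
        · exact ⟨v₀, h⟩
        · obtain ⟨w, hw, _⟩ := hKcov v₀ hv0' h
          exact ⟨w, hw⟩
      set U' := U \ K with hU'
      set L' := fun v => (L v).erase α with hL'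
      have hdeg' : ∀ v ∈ U', (U'.filter (fun w => r v w)).card < (L' v).card := by
        intro v hv
        rw [hU', Finset.mem_sdiff] at hv
        obtain ⟨hvU, hvK⟩ := hv
        by_cases hαv : α ∈ L v
        · obtain ⟨w, hwK, hrw⟩ := hKcov v (Finset.mem_filter.2 ⟨hvU, hαv⟩) hvK
          have hsub : U'.filter (fun w => r v w) ⊆ (U.filter (fun w => r v w)).erase w := by
            intro x hx
            rw [Finset.mem_filter, hU', Finset.mem_sdiff] at hx
            refine Finset.mem_erase.2 ⟨?_, Finset.mem_filter.2 ⟨hx.1.1, hx.2⟩⟩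
            intro h
            exact hx.1.2 (h ▸ hwK)
          have hwmem : w ∈ U.filter (fun w => r v w) :=
            Finset.mem_filter.2 ⟨hKU hwK, hrw⟩
          have h1 : (U'.filter (fun w => r v w)).card
              ≤ (U.filter (fun w => r v w)).card - 1 := by
            have := Finset.card_le_card hsub
            rwa [Finset.card_erase_of_mem hwmem] at this
          have h2 : 1 ≤ (U.filter (fun w => r v w)).card := Finset.card_pos.2 ⟨w, hwmem⟩
          have h3 := hdeg v hvU
          have h4 : (L' v).card = (L v).card - 1 := by
            rw [hL']
            exact Finset.card_erase_of_mem hαv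
          omega
        · have h4 : L' v = L v := by
            rw [hL']
            exact Finset.erase_eq_of_notMem hαv
          rw [h4]
          calc (U'.filter (fun w => r v w)).card
              ≤ (U.filter (fun w => r v w)).card :=
                Finset.card_le_card (Finset.filter_subset_filter _ (Finset.sdiff_subset))
            _ < (L v).card := hdeg v hvU
      have hsum' : ∑ v ∈ U', (L' v).card ≤ n := by
        have e1 : ∑ v ∈ U', (L' v).card ≤ ∑ v ∈ U', (L v).card :=
          Finset.sum_le_sum fun v _ => Finset.card_le_card (Finset.erase_subset _ _)
        have e2 : ∑ v ∈ U', (L v).card + ∑ v ∈ K, (L v).card = ∑ v ∈ U, (L v).card := by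
          rw [hU']
          exact Finset.sum_sdiff hKU
        have e3 : 1 ≤ ∑ v ∈ K, (L v).card := by
          obtain ⟨k, hk⟩ := hKne
          have : 1 ≤ (L k).card := Finset.card_pos.2 ⟨α, hKα k hk⟩
          have h5 : (L k).card ≤ ∑ v ∈ K, (L v).card :=
            Finset.single_le_sum (f := fun v => (L v).card) (fun _ _ => Nat.zero_le _) hk
          omega
        omega
      obtain ⟨c', hc'mem, hc'prop⟩ := ih U' L' hsum' hdeg'
      refine ⟨fun v => if v ∈ K then α else c' v, ?_, ?_⟩
      · intro v hv
        by_cases h : v ∈ K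
        · simpa [h] using hKα v h
        · have hv' : v ∈ U' := Finset.mem_sdiff.2 ⟨hv, h⟩
          have := hc'mem v hv'
          simp only [h, if_false]
          exact Finset.mem_of_mem_erase this
      · intro u hu v hv hadj
        by_cases hK1 : u ∈ K <;> by_cases hK2 : v ∈ K
        · exact absurd hadj (hKind u hK1 v hK2)
        · have hv' : v ∈ U' := Finset.mem_sdiff.2 ⟨hv, hK2⟩
          have := Finset.ne_of_mem_erase (hc'mem v hv')
          simp only [hK1, hK2, if_true, if_false]
          exact fun h => this h.symm
        · have hu' : u ∈ U' := Finset.mem_sdiff.2 ⟨hu, hK1⟩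
          have := Finset.ne_of_mem_erase (hc'mem u hu')
          simp only [hK1, hK2, if_true, if_false]
          exact this
        · have hu' : u ∈ U' := Finset.mem_sdiff.2 ⟨hu, hK1⟩
          have hv' : v ∈ U' := Finset.mem_sdiff.2 ⟨hv, hK2⟩
          simp only [hK1, hK2, if_false]
          exact hc'prop u hu' v hv' hadj

end Aux

/-- `G` is `L`-choosable: there is a proper colouring choosing each colour from its list. -/
def IsLChoosable {V : Type*} (G : SimpleGraph V) (L : V → Finset ℕ) : Prop :=
  ∃ c : V → ℕ, (∀ v, c v ∈ L v) ∧ ∀ u v, G.Adj u v → c u ≠ c v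

/-- Lemma 6.1. Let `G` be a finite `3`-regular bipartite graph with
vertex set partitioned into independent sets `A` and `B`. If `L` assigns a list of size
`3` to each vertex of `A` and a list of size `2` to each vertex of `B`, then `G` is
`L`-choosable. -/
theorem cubic_bipartite_choosable {V : Type*} [Fintype V] (G : SimpleGraph V)
    (A B : Set V) (hunion : A ∪ B = Set.univ) (hdisj : A ∩ B = ∅)
    (hAind : ∀ u ∈ A, ∀ v ∈ A, ¬ G.Adj u v)
    (hBind : ∀ u ∈ B, ∀ v ∈ B, ¬ G.Adj u v)
    (hreg : ∀ v, (G.neighborSet v).ncard = 3)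
    (L : V → Finset ℕ)
    (hLA : ∀ v ∈ A, (L v).card = 3) (hLB : ∀ v ∈ B, (L v).card = 2) :
    IsLChoosable G L := by
  classical
  haveI : DecidableRel G.Adj := Classical.decRel _
  have hreg' : ∀ v, (G.neighborFinset v).card = 3 := by
    intro v
    rw [SimpleGraph.neighborFinset_def, ← Set.ncard_eq_toFinset_card']
    exact hreg v
  obtain ⟨f, hfinj, hfmem⟩ := exists_injective_neighbor G hreg'
  have hfadj : ∀ v, G.Adj v (f v) := fun v =>
    (SimpleGraph.mem_neighborFinset G v (f v)).1 (hfmem v)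
  have hnotAB : ∀ v, v ∈ A → v ∈ B → False := by
    intro v h1 h2
    have : v ∈ A ∩ B := ⟨h1, h2⟩
    rw [hdisj] at this
    exact this
  set r : V → V → Prop := orient G A f with hr
  haveI : DecidableRel r := Classical.decRel _
  have hrAdj : ∀ u v, r u v → G.Adj u v := fun u v h => h.1
  have hker := kernel_exists G A B f hunion hdisj hAind hBind hfadj
  have hdeg : ∀ v ∈ (Finset.univ : Finset V),
      ((Finset.univ : Finset V).filter (fun w => r v w)).card < (L v).card := by
    intro v _
    have hvAB : v ∈ A ∪ B := by rw [hunion]; trivial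
    rcases hvAB with hvA | hvB
    · have hsub : (Finset.univ : Finset V).filter (fun w => r v w)
          ⊆ (G.neighborFinset v).erase (f v) := by
        intro x hx
        rw [Finset.mem_filter] at hx
        obtain ⟨hadj, hcase⟩ := hx.2
        rcases hcase with ⟨_, hne⟩ | ⟨hvA', _, _⟩
        · exact Finset.mem_erase.2 ⟨fun h => hne h.symm,
            (SimpleGraph.mem_neighborFinset G v x).2 hadj⟩
        · exact absurd hvA hvA'
      have h1 : ((Finset.univ : Finset V).filter (fun w => r v w)).card
          ≤ ((G.neighborFinset v).erase (f v)).card := Finset.card_le_card hsub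
      have h2 : ((G.neighborFinset v).erase (f v)).card = 2 := by
        rw [Finset.card_erase_of_mem (hfmem v), hreg' v]
      rw [hLA v hvA]
      omega
    · have hcard : ((Finset.univ : Finset V).filter (fun w => r v w)).card ≤ 1 := by
        apply Finset.card_le_one.2
        intro x hx y hy
        rw [Finset.mem_filter] at hx hy
        have hvA : v ∉ A := fun h => hnotAB v h hvB
        have hx' : x ∈ A ∧ f x = v := by
          rcases hx.2.2 with ⟨h, _⟩ | ⟨_, h1, h2⟩
          · exact absurd h hvA
          · exact ⟨h1, h2⟩
        have hy' : y ∈ A ∧ f y = v := by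
          rcases hy.2.2 with ⟨h, _⟩ | ⟨_, h1, h2⟩
          · exact absurd h hvA
          · exact ⟨h1, h2⟩
        exact hfinj (hx'.2.trans hy'.2.symm)
      rw [hLB v hvB]
      omega
  obtain ⟨c, hcmem, hcprop⟩ := kernel_coloring G r hrAdj hker
    (∑ v ∈ (Finset.univ : Finset V), (L v).card) Finset.univ L le_rfl hdeg
  exact ⟨c, fun v => hcmem v (Finset.mem_univ v),
    fun u v hadj => hcprop u (Finset.mem_univ u) v (Finset.mem_univ v) hadj⟩
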